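/- For every integer n ≥ 0 and every r ∈ (0,1), 0 < r^n/(2^{n+1} n!) ≤ J_n(r) ≤ r^n/(2^n n!). -/

import Mathlib

open Real Set

/-- Bessel function of the first kind of integer order, via the Poisson integral
representation. -/
noncomputable def besselJ (n : ℕ) (r : ℝ) : ℝ :=
  r ^ n / (2 ^ n * Real.Gamma ((n : ℝ) + 1 / 2) * Real.sqrt Real.pi) *
    ∫ t in (-1 : ℝ)..1, Real.cos (r * t) * (1 - t ^ 2) ^ ((n : ℝ) - 1 / 2)

lemma image_cos_Ioo : Real.cos '' Set.Ioo 0 π = Set.Ioo (-1 : ℝ) 1 := by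
  ext y
  constructor
  · rintro ⟨x, hx, rfl⟩
    constructor
    · have := Real.strictAntiOn_cos ⟨hx.1.le, hx.2.le⟩ ⟨Real.pi_pos.le, le_refl π⟩ hx.2
      simpa [Real.cos_pi] using this
    · have := Real.strictAntiOn_cos ⟨le_refl (0:ℝ), Real.pi_pos.le⟩ ⟨hx.1.le, hx.2.le⟩ hx.1
      simpa [Real.cos_zero] using this
  · intro hy
    refine ⟨Real.arccos y, ⟨Real.arccos_pos.2 hy.2, ?_⟩, Real.cos_arccos hy.1.le hy.2.le⟩
    refine lt_of_le_of_ne (Real.arccos_le_pi y) ?_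
    rw [Ne, Real.arccos_eq_pi]
    intro h; linarith [hy.1]

lemma abs_deriv_eq (n : ℕ) {x : ℝ} (hx : x ∈ Set.Ioo 0 π) :
    |(-Real.sin x)| • (1 - Real.cos x ^ 2) ^ ((n : ℝ) - 1 / 2) = Real.sin x ^ (2 * n) := by
  have hs : 0 < Real.sin x := Real.sin_pos_of_pos_of_lt_pi hx.1 hx.2
  have h1 : (1 : ℝ) - Real.cos x ^ 2 = Real.sin x ^ 2 := by
    have := Real.sin_sq_add_cos_sq x; linarith
  rw [abs_neg, abs_of_pos hs, smul_eq_mul, h1]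
  have h2 : (Real.sin x ^ 2 : ℝ) ^ ((n : ℝ) - 1 / 2) = Real.sin x ^ (2 * ((n : ℝ) - 1 / 2)) := by
    rw [← Real.rpow_natCast (Real.sin x) 2, ← Real.rpow_mul hs.le]
    norm_num
  rw [h2]
  rw [show (2 : ℝ) * ((n : ℝ) - 1 / 2) = ((2 * n : ℕ) : ℝ) - 1 by push_cast; ring,
    ← Real.rpow_natCast (Real.sin x) (2 * n)]
  nth_rewrite 1 [← Real.rpow_one (Real.sin x)]
  rw [← Real.rpow_add hs]
  norm_num

lemma integrable_kernel (n : ℕ) :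
    MeasureTheory.IntegrableOn (fun t : ℝ => (1 - t ^ 2) ^ ((n : ℝ) - 1 / 2))
      (Set.Ioo (-1 : ℝ) 1) := by
  rw [← image_cos_Ioo,
    MeasureTheory.integrableOn_image_iff_integrableOn_abs_deriv_smul measurableSet_Ioo
      (fun x _ => (Real.hasDerivAt_cos x).hasDerivWithinAt)
      (Real.injOn_cos.mono Set.Ioo_subset_Icc_self)]
  apply MeasureTheory.IntegrableOn.congr_fun
    (f := fun x : ℝ => Real.sin x ^ (2 * n))
  · exact ((Real.continuous_sin.pow _).integrableOn_Icc).mono_set Set.Ioo_subset_Icc_self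
  · intro x hx
    exact (abs_deriv_eq n hx).symm
  · exact measurableSet_Ioo

lemma kernel_integral (n : ℕ) :
    ∫ t in Set.Ioo (-1 : ℝ) 1, (1 - t ^ 2) ^ ((n : ℝ) - 1 / 2) =
      π * ∏ i ∈ Finset.range n, (2 * (i : ℝ) + 1) / (2 * i + 2) := by
  rw [← image_cos_Ioo,
    MeasureTheory.integral_image_eq_integral_abs_deriv_smul measurableSet_Ioo
      (fun x _ => (Real.hasDerivAt_cos x).hasDerivWithinAt)
      (Real.injOn_cos.mono Set.Ioo_subset_Icc_self)]
  rw [MeasureTheory.setIntegral_congr_fun measurableSet_Ioo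
    (fun x hx => abs_deriv_eq n hx)]
  rw [← MeasureTheory.integral_Ioc_eq_integral_Ioo,
    ← intervalIntegral.integral_of_le Real.pi_pos.le]
  exact integral_sin_pow_even n

lemma gamma_prod (n : ℕ) :
    Real.sqrt π * Real.Gamma ((n : ℝ) + 1 / 2) / (n.factorial : ℝ) =
      π * ∏ i ∈ Finset.range n, (2 * (i : ℝ) + 1) / (2 * i + 2) := by
  induction n with
  | zero =>
    simp only [Nat.cast_zero, zero_add, Nat.factorial_zero, Nat.cast_one, div_one,
      Finset.range_zero, Finset.prod_empty, mul_one, Real.Gamma_one_half_eq]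
    exact Real.mul_self_sqrt Real.pi_pos.le
  | succ k ih =>
    have hne : ((k : ℝ) + 1 / 2) ≠ 0 := by positivity
    have hG : Real.Gamma (((k + 1 : ℕ) : ℝ) + 1 / 2) =
        ((k : ℝ) + 1 / 2) * Real.Gamma ((k : ℝ) + 1 / 2) := by
      push_cast
      rw [show (k : ℝ) + 1 + 1 / 2 = ((k : ℝ) + 1 / 2) + 1 by ring,
        Real.Gamma_add_one hne]
    have hf : (k.factorial : ℝ) ≠ 0 := Nat.cast_ne_zero.2 k.factorial_ne_zero
    rw [hG, Nat.factorial_succ, Finset.prod_range_succ, ← mul_assoc π _ _, ← ih]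
    push_cast
    field_simp

theorem bessel_two_sided_bound (n : ℕ) (r : ℝ) (hr : r ∈ Set.Ioo (0 : ℝ) 1) :
    0 < r ^ n / (2 ^ (n + 1) * Nat.factorial n) ∧
      r ^ n / (2 ^ (n + 1) * Nat.factorial n) ≤ besselJ n r ∧
      besselJ n r ≤ r ^ n / (2 ^ n * Nat.factorial n) := by
  obtain ⟨hr0, hr1⟩ := hr
  have hfac : (0 : ℝ) < (n.factorial : ℝ) := by positivity
  have hG : (0 : ℝ) < Real.Gamma ((n : ℝ) + 1 / 2) :=
    Real.Gamma_pos_of_pos (by positivity)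
  have hsq : (0 : ℝ) < Real.sqrt π := Real.sqrt_pos.2 Real.pi_pos
  -- the kernel integral value
  have hB : ∫ t in Set.Ioo (-1 : ℝ) 1, (1 - t ^ 2) ^ ((n : ℝ) - 1 / 2) =
      Real.sqrt π * Real.Gamma ((n : ℝ) + 1 / 2) / (n.factorial : ℝ) := by
    rw [kernel_integral n, gamma_prod n]
  set g : ℝ → ℝ := fun t => (1 - t ^ 2) ^ ((n : ℝ) - 1 / 2) with hg
  have hgint : MeasureTheory.IntegrableOn g (Set.Ioc (-1 : ℝ) 1) := by
    rw [integrableOn_Ioc_iff_integrableOn_Ioo]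
    exact integrable_kernel n
  have hgii : IntervalIntegrable g MeasureTheory.volume (-1 : ℝ) 1 := by
    rw [intervalIntegrable_iff_integrableOn_Ioc_of_le (by norm_num)]
    exact hgint
  have hfii : IntervalIntegrable (fun t => Real.cos (r * t) * g t)
      MeasureTheory.volume (-1 : ℝ) 1 := by
    rw [intervalIntegrable_iff_integrableOn_Ioc_of_le (by norm_num)]
    exact hgint.bdd_mul ((Real.continuous_cos.comp
      (continuous_const.mul continuous_id)).aestronglyMeasurable)
      (Filter.Eventually.of_forall fun x =>
        (by simpa using Real.abs_cos_le_one (r * x) : ‖Real.cos (r * x)‖ ≤ 1))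
  -- pointwise bounds for cos (r * t) on Icc
  have hcos : ∀ t ∈ Set.Icc (-1 : ℝ) 1,
      (1 : ℝ) / 2 ≤ Real.cos (r * t) ∧ Real.cos (r * t) ≤ 1 := by
    intro t ht
    refine ⟨?_, Real.cos_le_one _⟩
    have h1 : (r * t) ^ 2 ≤ 1 := by
      have h2 : t ^ 2 ≤ 1 := by nlinarith [ht.1, ht.2]
      nlinarith [mul_nonneg (sub_nonneg.2 h2) (sq_nonneg r),
        mul_pos hr0 (sub_pos.2 hr1)]
    nlinarith [Real.one_sub_sq_div_two_le_cos (x := r * t)]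
  have hgnn : ∀ t ∈ Set.Icc (-1 : ℝ) 1, (0 : ℝ) ≤ g t := by
    intro t ht
    exact Real.rpow_nonneg (by nlinarith [ht.1, ht.2]) _
  -- the integral bounds
  have hBval : ∫ t in (-1 : ℝ)..1, g t =
      Real.sqrt π * Real.Gamma ((n : ℝ) + 1 / 2) / (n.factorial : ℝ) := by
    rw [intervalIntegral.integral_of_le (by norm_num : (-1:ℝ) ≤ 1),
      MeasureTheory.integral_Ioc_eq_integral_Ioo, hB]
  have hupper : ∫ t in (-1 : ℝ)..1, Real.cos (r * t) * g t ≤ ∫ t in (-1 : ℝ)..1, g t := by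
    apply intervalIntegral.integral_mono_on (by norm_num) hfii hgii
    intro t ht
    have := hcos t ht
    nlinarith [hgnn t ht, this.2]
  have hlower : (1 / 2 : ℝ) * ∫ t in (-1 : ℝ)..1, g t ≤
      ∫ t in (-1 : ℝ)..1, Real.cos (r * t) * g t := by
    rw [← intervalIntegral.integral_const_mul]
    apply intervalIntegral.integral_mono_on (by norm_num) (hgii.const_mul _) hfii
    intro t ht
    have := hcos t ht
    nlinarith [hgnn t ht, this.1]
  -- put everything together
  have hpos : (0 : ℝ) < r ^ n / (2 ^ (n + 1) * n.factorial) := by positivity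
  refine ⟨hpos, ?_, ?_⟩
  · have key : r ^ n / (2 ^ n * Real.Gamma ((n : ℝ) + 1 / 2) * Real.sqrt π) *
        ((1 / 2 : ℝ) * (Real.sqrt π * Real.Gamma ((n : ℝ) + 1 / 2) / (n.factorial : ℝ))) =
        r ^ n / (2 ^ (n + 1) * n.factorial) := by
      rw [pow_succ]
      field_simp
    calc r ^ n / (2 ^ (n + 1) * n.factorial)
        = r ^ n / (2 ^ n * Real.Gamma ((n : ℝ) + 1 / 2) * Real.sqrt π) *
          ((1 / 2 : ℝ) * (Real.sqrt π * Real.Gamma ((n : ℝ) + 1 / 2) / (n.factorial : ℝ))) :=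
          key.symm
      _ ≤ besselJ n r := by
          unfold besselJ
          apply mul_le_mul_of_nonneg_left _ (by positivity)
          rw [← hBval]
          exact hlower
  · have key : r ^ n / (2 ^ n * Real.Gamma ((n : ℝ) + 1 / 2) * Real.sqrt π) *
        (Real.sqrt π * Real.Gamma ((n : ℝ) + 1 / 2) / (n.factorial : ℝ)) =
        r ^ n / (2 ^ n * n.factorial) := by
      field_simp
    calc besselJ n r
        ≤ r ^ n / (2 ^ n * Real.Gamma ((n : ℝ) + 1 / 2) * Real.sqrt π) *
          (Real.sqrt π * Real.Gamma ((n : ℝ) + 1 / 2) / (n.factorial : ℝ)) := by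
          unfold besselJ
          apply mul_le_mul_of_nonneg_left _ (by positivity)
          rw [← hBval]
          exact hupper
      _ = r ^ n / (2 ^ n * n.factorial) := key
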